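/- For 1 < α < 2 and probability densities p, q on [0,∞) with the same mean w and finite α-th moments, d_α(T[p], T[q]) ≤ (2/(α+1)) d_α(p, q); in particular T is a contraction in the metric d_α since 2/(α+1) < 1. -/

import Mathlib

open MeasureTheory Real Set intervalIntegral

/-- S[p](x) = ∫_x^∞ p(u)/u du. -/
noncomputable def S (p : ℝ → ℝ) (x : ℝ) : ℝ := ∫ u in Set.Ioi x, p u / u

/-- T[p] = S[p] * S[p] (convolution on [0,∞)). -/
noncomputable def T (p : ℝ → ℝ) (x : ℝ) : ℝ := ∫ v in (0:ℝ)..x, S p (x - v) * S p v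

/-- Laplace transform of a density on [0,∞). -/
noncomputable def L (p : ℝ → ℝ) (s : ℝ) : ℝ := ∫ x in Set.Ioi (0:ℝ), Real.exp (-s * x) * p x

/-- The metric d_α(p,q) = sup_{s>0} |L[p](s) - L[q](s)|/s^α (valued in ℝ≥0∞). -/
noncomputable def dAlpha (α : ℝ) (p q : ℝ → ℝ) : ENNReal :=
  ⨆ s ∈ Set.Ioi (0:ℝ), ENNReal.ofReal (|L p s - L q s| / s ^ α)

section Aux

variable {p : ℝ → ℝ} {s : ℝ}

lemma integrable_of_lt_top {f : ℝ → ℝ} {μ : Measure ℝ} (hm : AEMeasurable f μ) (hnn : 0 ≤ᵐ[μ] f)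
    (h : ∫⁻ x, ENNReal.ofReal (f x) ∂μ < ⊤) : Integrable f μ :=
  ⟨hm.aestronglyMeasurable, (hasFiniteIntegral_iff_ofReal hnn).mpr h⟩

lemma f_integrableOn (hpm : Measurable p) (hpnn : ∀ x, 0 ≤ p x)
    (hpint : IntegrableOn p (Set.Ioi 0)) {a : ℝ} (ha : 0 < a) :
    IntegrableOn (fun u => p u / u) (Set.Ioi a) := by
  have h1 : IntegrableOn (fun u => p u / a) (Set.Ioi a) :=
    (hpint.mono_set (Ioi_subset_Ioi ha.le)).div_const a
  refine h1.mono' (hpm.div measurable_id).aestronglyMeasurable ?_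
  filter_upwards [ae_restrict_mem measurableSet_Ioi] with u hu
  rw [mem_Ioi] at hu
  have hu0 : 0 < u := ha.trans hu
  rw [Real.norm_eq_abs, abs_of_nonneg (div_nonneg (hpnn u) hu0.le)]
  exact div_le_div_of_nonneg_left (hpnn u) ha hu.le |>.trans_eq rfl

lemma S_nonneg (hpnn : ∀ x, 0 ≤ p x) {x : ℝ} (hx : 0 ≤ x) : 0 ≤ S p x :=
  setIntegral_nonneg measurableSet_Ioi fun u hu =>
    div_nonneg (hpnn u) (hx.trans (le_of_lt hu))

lemma S_split (hpm : Measurable p) (hpnn : ∀ x, 0 ≤ p x) (hpint : IntegrableOn p (Set.Ioi 0))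
    {a b : ℝ} (ha : 0 < a) (hab : a ≤ b) :
    S p a = (∫ u in Ioc a b, p u / u) + S p b := by
  rw [S, S, ← Ioc_union_Ioi_eq_Ioi hab,
    setIntegral_union (Ioc_disjoint_Ioi le_rfl) measurableSet_Ioi
      ((f_integrableOn hpm hpnn hpint ha).mono_set Ioc_subset_Ioi_self)
      ((f_integrableOn hpm hpnn hpint (ha.trans_le hab)))]

lemma S_antitone (hpm : Measurable p) (hpnn : ∀ x, 0 ≤ p x) (hpint : IntegrableOn p (Set.Ioi 0))
    {a b : ℝ} (ha : 0 < a) (hab : a ≤ b) : S p b ≤ S p a := by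
  rw [S_split hpm hpnn hpint ha hab]
  have : 0 ≤ ∫ u in Ioc a b, p u / u :=
    setIntegral_nonneg measurableSet_Ioc fun u hu => div_nonneg (hpnn u) (ha.trans hu.1).le
  linarith

lemma S_contOn (hpm : Measurable p) (hpnn : ∀ x, 0 ≤ p x) (hpint : IntegrableOn p (Set.Ioi 0)) :
    ContinuousOn (S p) (Ioi 0) := by
  intro x0 hx0
  rw [mem_Ioi] at hx0
  apply ContinuousAt.continuousWithinAt
  set a := x0 / 2 with ha_def
  have ha : 0 < a := half_pos hx0
  have hax : a < x0 := half_lt_self hx0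
  set b := x0 + 1 with hb_def
  have hx0b : x0 < b := by simp [hb_def]
  have hab : a ≤ b := by linarith
  have hint : IntegrableOn (fun u => p u / u) (Icc a b) :=
    (f_integrableOn hpm hpnn hpint (half_pos ha)).mono_set
      (fun u hu => lt_of_lt_of_le (half_lt_self ha) hu.1)
  have hcont : ContinuousOn (fun x => ∫ t in Ioc a x, p t / t) (Icc a b) :=
    intervalIntegral.continuousOn_primitive hint
  have heq : ∀ x ∈ Icc a b, S p x
      = S p b + ((∫ u in Ioc a b, p u / u) - ∫ t in Ioc a x, p t / t) := by
    intro x hx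
    have h1 : S p x = (∫ u in Ioc x b, p u / u) + S p b :=
      S_split hpm hpnn hpint (ha.trans_le hx.1) hx.2
    have h2 : (∫ u in Ioc a b, p u / u)
        = (∫ u in Ioc a x, p u / u) + ∫ u in Ioc x b, p u / u := by
      rw [← Ioc_union_Ioc_eq_Ioc hx.1 hx.2,
        setIntegral_union (Ioc_disjoint_Ioc_of_le le_rfl) measurableSet_Ioc
          (hint.mono_set (Ioc_subset_Icc_self.trans (Icc_subset_Icc le_rfl hx.2)))
          (hint.mono_set (Ioc_subset_Icc_self.trans (Icc_subset_Icc hx.1 le_rfl)))]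
    rw [h1, h2]; ring
  have hmem : Icc a b ∈ nhds x0 := Icc_mem_nhds hax hx0b
  have hC : ContinuousAt (fun x => S p b + ((∫ u in Ioc a b, p u / u) - ∫ t in Ioc a x, p t / t)) x0 :=
    (continuousAt_const.add (continuousAt_const.sub (hcont.continuousAt hmem)))
  exact hC.congr (Filter.eventuallyEq_of_mem hmem heq).symm

lemma S_aemeasurable (hpm : Measurable p) (hpnn : ∀ x, 0 ≤ p x)
    (hpint : IntegrableOn p (Set.Ioi 0)) :
    AEMeasurable (S p) (volume.restrict (Ioi 0)) :=
  (S_contOn hpm hpnn hpint).aemeasurable measurableSet_Ioi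

lemma lint_p (hpnn : ∀ x, 0 ≤ p x) (hpint : IntegrableOn p (Set.Ioi 0)) :
    ∫⁻ u in Ioi (0:ℝ), ENNReal.ofReal (p u) = ENNReal.ofReal (∫ u in Ioi (0:ℝ), p u) :=
  (ofReal_integral_eq_lintegral_ofReal hpint (Filter.Eventually.of_forall fun x => hpnn x)).symm

end Aux
section Aux2

variable {p : ℝ → ℝ} {s : ℝ}

lemma exp_intervalIntegral {r c : ℝ} (hr : r ≠ 0) :
    ∫ x in (0:ℝ)..c, Real.exp (-r * x) = (1 - Real.exp (-r * c)) / r := by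
  have h : ∀ x, Real.exp (-r * x) = (fun y => Real.exp y) ((-r) * x) := fun _ => rfl
  rw [funext h, integral_comp_mul_left (fun y => Real.exp y) (neg_ne_zero.mpr hr)]
  rw [integral_exp, smul_eq_mul, mul_zero, Real.exp_zero]
  rw [eq_div_iff hr, mul_comm]
  ring_nf
  rw [mul_inv_cancel₀ hr]
  ring

lemma lint_exp {r c : ℝ} (hr : 0 < r) (hc : 0 < c) :
    ∫⁻ x in Ioo (0:ℝ) c, ENNReal.ofReal (Real.exp (-r * x))
      = ENNReal.ofReal ((1 - Real.exp (-r * c)) / r) := by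
  have hint : IntegrableOn (fun x => Real.exp (-r * x)) (Ioo 0 c) :=
    ((Real.continuous_exp.comp (continuous_const.mul continuous_id)).integrableOn_Icc).mono_set
      Ioo_subset_Icc_self
  rw [← ofReal_integral_eq_lintegral_ofReal hint
      (Filter.Eventually.of_forall fun x => (Real.exp_pos _).le)]
  congr 1
  rw [← integral_Ioc_eq_integral_Ioo, ← integral_of_le hc.le]
  exact exp_intervalIntegral hr.ne'

/-- integrability of `x ↦ exp (-t x) p x` for `t ≥ 0`. -/
lemma exp_mul_p_integrable (hpm : Measurable p) (hpnn : ∀ x, 0 ≤ p x)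
    (hpint : IntegrableOn p (Set.Ioi 0)) {t : ℝ} (ht : 0 ≤ t) :
    IntegrableOn (fun x => Real.exp (-t * x) * p x) (Set.Ioi 0) := by
  refine hpint.mono'
    (((Real.continuous_exp.comp (continuous_const.mul continuous_id)).measurable.mul
      hpm).aestronglyMeasurable) ?_
  filter_upwards [ae_restrict_mem measurableSet_Ioi] with x hx
  rw [mem_Ioi] at hx
  rw [Real.norm_eq_abs, abs_of_nonneg (mul_nonneg (Real.exp_pos _).le (hpnn x))]
  calc Real.exp (-t * x) * p x ≤ 1 * p x := by
        apply mul_le_mul_of_nonneg_right _ (hpnn x)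
        rw [Real.exp_le_one_iff]
        nlinarith
    _ = p x := one_mul _

lemma L_nonneg (hpnn : ∀ x, 0 ≤ p x) (t : ℝ) : 0 ≤ L p t :=
  setIntegral_nonneg measurableSet_Ioi fun x _ => mul_nonneg (Real.exp_pos _).le (hpnn x)

lemma L_le_one (hpm : Measurable p) (hpnn : ∀ x, 0 ≤ p x)
    (hpint : IntegrableOn p (Set.Ioi 0)) (hp1 : ∫ x in Set.Ioi (0:ℝ), p x = 1)
    {t : ℝ} (ht : 0 ≤ t) : L p t ≤ 1 := by
  rw [← hp1, L]
  refine setIntegral_mono_on (exp_mul_p_integrable hpm hpnn hpint ht) hpint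
    measurableSet_Ioi fun x hx => ?_
  rw [mem_Ioi] at hx
  calc Real.exp (-t * x) * p x ≤ 1 * p x := by
        apply mul_le_mul_of_nonneg_right _ (hpnn x)
        rw [Real.exp_le_one_iff]
        nlinarith
    _ = p x := one_mul _

lemma L_antitoneOn (hpm : Measurable p) (hpnn : ∀ x, 0 ≤ p x)
    (hpint : IntegrableOn p (Set.Ioi 0)) :
    Antitone (fun t => L p (max t 0)) := by
  intro t1 t2 h
  show L p (max t2 0) ≤ L p (max t1 0)
  set u1 := max t1 0
  set u2 := max t2 0
  have hu1 : 0 ≤ u1 := le_max_right _ _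
  have hu12 : u1 ≤ u2 := max_le_max h le_rfl
  refine setIntegral_mono_on (exp_mul_p_integrable hpm hpnn hpint (hu1.trans hu12))
    (exp_mul_p_integrable hpm hpnn hpint hu1) measurableSet_Ioi fun x hx => ?_
  rw [mem_Ioi] at hx
  apply mul_le_mul_of_nonneg_right _ (hpnn x)
  apply Real.exp_le_exp.mpr
  nlinarith

lemma L_aesm (hpm : Measurable p) (hpnn : ∀ x, 0 ≤ p x)
    (hpint : IntegrableOn p (Set.Ioi 0)) {c : ℝ} :
    AEStronglyMeasurable (L p) (volume.restrict (Ioc 0 c)) := by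
  refine ((L_antitoneOn hpm hpnn hpint).measurable.aestronglyMeasurable).congr ?_
  filter_upwards [ae_restrict_mem measurableSet_Ioc] with t ht
  show L p (max t 0) = L p t
  rw [max_eq_left ht.1.le]

lemma L_integrableOn (hpm : Measurable p) (hpnn : ∀ x, 0 ≤ p x)
    (hpint : IntegrableOn p (Set.Ioi 0)) (hp1 : ∫ x in Set.Ioi (0:ℝ), p x = 1)
    {c : ℝ} : IntegrableOn (L p) (Ioc 0 c) := by
  refine Integrable.mono' (g := fun _ => (1:ℝ)) (integrableOn_const measure_Ioc_lt_top.ne)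
    (L_aesm hpm hpnn hpint) ?_
  filter_upwards [ae_restrict_mem measurableSet_Ioc] with t ht
  rw [Real.norm_eq_abs, abs_of_nonneg (L_nonneg hpnn t)]
  exact L_le_one hpm hpnn hpint hp1 ht.1.le

end Aux2
noncomputable def gfun (p : ℝ → ℝ) (s : ℝ) : ℝ → ENNReal :=
  (Ioi 0).indicator (fun y => ENNReal.ofReal (Real.exp (-s * y) * S p y))

section Aux3

variable {p : ℝ → ℝ} {s : ℝ}

lemma S_integrableOn_Ioc (hpm : Measurable p) (hpnn : ∀ x, 0 ≤ p x)
    (hpint : IntegrableOn p (Set.Ioi 0)) {c : ℝ} (hc : 0 < c) :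
    IntegrableOn (S p) (Ioc 0 c) := by
  have hmeas : AEMeasurable (S p) (volume.restrict (Ioc 0 c)) :=
    (S_aemeasurable hpm hpnn hpint).mono_measure
      (Measure.restrict_mono Ioc_subset_Ioi_self le_rfl)
  refine integrable_of_lt_top hmeas ?_ ?_
  · filter_upwards [ae_restrict_mem measurableSet_Ioc] with v hv
    exact S_nonneg hpnn hv.1.le
  · have step1 : ∫⁻ v in Ioc 0 c, ENNReal.ofReal (S p v)
        = ∫⁻ v in Ioc 0 c, ∫⁻ u, (Ioi v).indicator (fun u => ENNReal.ofReal (p u / u)) u := by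
      refine lintegral_congr_ae ?_
      filter_upwards [ae_restrict_mem measurableSet_Ioc] with v hv
      rw [lintegral_indicator measurableSet_Ioi, S,
        ofReal_integral_eq_lintegral_ofReal (f_integrableOn hpm hpnn hpint hv.1) ?_]
      filter_upwards [ae_restrict_mem measurableSet_Ioi] with u hu
      exact div_nonneg (hpnn u) (hv.1.trans hu).le
    rw [step1]
    have hmeas2 : AEMeasurable (Function.uncurry fun v u =>
        (Ioi v).indicator (fun u => ENNReal.ofReal (p u / u)) u)
        ((volume.restrict (Ioc 0 c)).prod volume) := by
      apply Measurable.aemeasurable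
      have heq : (Function.uncurry fun v u => (Ioi v).indicator (fun u => ENNReal.ofReal (p u / u)) u)
          = fun z : ℝ × ℝ => if z.1 < z.2 then ENNReal.ofReal (p z.2 / z.2) else 0 := by
        ext z; simp [Function.uncurry, Set.indicator_apply, mem_Ioi]
      rw [heq]
      exact Measurable.ite (measurableSet_lt measurable_fst measurable_snd)
        ((ENNReal.measurable_ofReal.comp (hpm.div measurable_id)).comp measurable_snd)
        measurable_const
    rw [lintegral_lintegral_swap hmeas2]
    have hb : ∀ u : ℝ, (∫⁻ v in Ioc 0 c, (Ioi v).indicator (fun u => ENNReal.ofReal (p u / u)) u)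
        ≤ (Ioi 0).indicator (fun u => ENNReal.ofReal (p u)) u := by
      intro u
      have h1 : ∀ v, (Ioi v).indicator (fun u => ENNReal.ofReal (p u / u)) u
          = (Iio u).indicator (fun _ => ENNReal.ofReal (p u / u)) v := by
        intro v; simp [Set.indicator_apply, mem_Ioi, mem_Iio]
      simp_rw [h1]
      rw [lintegral_indicator measurableSet_Iio, Measure.restrict_restrict measurableSet_Iio,
        setLIntegral_const]
      have hvol : volume (Iio u ∩ Ioc 0 c) ≤ ENNReal.ofReal u := by
        calc volume (Iio u ∩ Ioc 0 c) ≤ volume (Ioo 0 u) :=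
              measure_mono (fun t ht => ⟨ht.2.1, ht.1⟩)
          _ = ENNReal.ofReal u := by rw [Real.volume_Ioo, sub_zero]
      by_cases hu : 0 < u
      · rw [Set.indicator_of_mem (mem_Ioi.mpr hu)]
        calc ENNReal.ofReal (p u / u) * volume (Iio u ∩ Ioc 0 c)
            ≤ ENNReal.ofReal (p u / u) * ENNReal.ofReal u := by gcongr
          _ = ENNReal.ofReal (p u / u * u) :=
              (ENNReal.ofReal_mul (div_nonneg (hpnn u) hu.le)).symm
          _ = ENNReal.ofReal (p u) := by rw [div_mul_cancel₀ _ (ne_of_gt hu)]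
      · have : ENNReal.ofReal u = 0 := by
          rw [ENNReal.ofReal_eq_zero]; linarith [not_lt.mp hu]
        calc ENNReal.ofReal (p u / u) * volume (Iio u ∩ Ioc 0 c)
            ≤ ENNReal.ofReal (p u / u) * ENNReal.ofReal u := by gcongr
          _ = 0 := by rw [this, mul_zero]
          _ ≤ _ := zero_le
    calc ∫⁻ u, ∫⁻ v in Ioc 0 c, (Ioi v).indicator (fun u => ENNReal.ofReal (p u / u)) u
        ≤ ∫⁻ u, (Ioi 0).indicator (fun u => ENNReal.ofReal (p u)) u := lintegral_mono hb
      _ = ∫⁻ u in Ioi 0, ENNReal.ofReal (p u) := lintegral_indicator measurableSet_Ioi _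
      _ < ⊤ := by rw [lint_p hpnn hpint]; exact ENNReal.ofReal_lt_top

lemma K_eq_intLp (hpm : Measurable p) (hpnn : ∀ x, 0 ≤ p x)
    (hpint : IntegrableOn p (Set.Ioi 0)) (hp1 : ∫ x in Set.Ioi (0:ℝ), p x = 1)
    (hs : 0 < s) :
    ENNReal.ofReal (∫ t in (0:ℝ)..s, L p t)
      = ∫⁻ u in Ioi (0:ℝ), ENNReal.ofReal (p u / u * (1 - Real.exp (-s * u))) := by
  rw [integral_of_le hs.le,
    ofReal_integral_eq_lintegral_ofReal (L_integrableOn hpm hpnn hpint hp1)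
      (Filter.Eventually.of_forall fun t => L_nonneg hpnn t)]
  have step : ∫⁻ t in Ioc 0 s, ENNReal.ofReal (L p t)
      = ∫⁻ t in Ioc 0 s, ∫⁻ x, (Ioi 0).indicator
          (fun x => ENNReal.ofReal (Real.exp (-t * x) * p x)) x := by
    refine lintegral_congr_ae ?_
    filter_upwards [ae_restrict_mem measurableSet_Ioc] with t ht
    rw [lintegral_indicator measurableSet_Ioi, L,
      ofReal_integral_eq_lintegral_ofReal (exp_mul_p_integrable hpm hpnn hpint ht.1.le)
        (Filter.Eventually.of_forall fun x => mul_nonneg (Real.exp_pos _).le (hpnn x))]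
  rw [step]
  have hmeas2 : AEMeasurable (Function.uncurry fun t x =>
      (Ioi 0).indicator (fun x => ENNReal.ofReal (Real.exp (-t * x) * p x)) x)
      ((volume.restrict (Ioc 0 s)).prod volume) := by
    apply Measurable.aemeasurable
    have heq : (Function.uncurry fun t x =>
        (Ioi 0).indicator (fun x => ENNReal.ofReal (Real.exp (-t * x) * p x)) x)
        = fun z : ℝ × ℝ => if 0 < z.2 then ENNReal.ofReal (Real.exp (-z.1 * z.2) * p z.2) else 0 := by
      ext z; simp [Function.uncurry, Set.indicator_apply, mem_Ioi]
    rw [heq]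
    refine Measurable.ite (measurableSet_lt measurable_const measurable_snd) ?_ measurable_const
    exact ENNReal.measurable_ofReal.comp
      (((measurable_fst.neg.mul measurable_snd).exp).mul (hpm.comp measurable_snd))
  rw [lintegral_lintegral_swap hmeas2]
  have hpull : ∀ x : ℝ, (∫⁻ t in Ioc 0 s, (Ioi 0).indicator
      (fun x => ENNReal.ofReal (Real.exp (-t * x) * p x)) x)
      = (Ioi 0).indicator (fun x => ∫⁻ t in Ioc 0 s,
          ENNReal.ofReal (Real.exp (-t * x) * p x)) x := by
    intro x
    by_cases hx : x ∈ Ioi (0:ℝ)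
    · simp only [Set.indicator_of_mem hx]
    · simp only [Set.indicator_of_notMem hx, lintegral_zero]
  simp_rw [hpull]
  rw [lintegral_indicator measurableSet_Ioi]
  refine lintegral_congr_ae ?_
  filter_upwards [ae_restrict_mem measurableSet_Ioi] with x hx
  rw [mem_Ioi] at hx
  have h1 : ∀ t : ℝ, ENNReal.ofReal (Real.exp (-t * x) * p x)
      = ENNReal.ofReal (Real.exp (-x * t)) * ENNReal.ofReal (p x) := by
    intro t
    rw [← ENNReal.ofReal_mul (Real.exp_pos _).le]
    congr 2
    ring
  simp_rw [h1]
  rw [lintegral_mul_const' _ _ ENNReal.ofReal_ne_top,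
    (Measure.restrict_congr_set Ioo_ae_eq_Ioc).symm]
  rw [lint_exp hx hs, ← ENNReal.ofReal_mul (div_nonneg
    (sub_nonneg.mpr (Real.exp_le_one_iff.mpr (by nlinarith))) hx.le)]
  congr 1
  have hE : Real.exp (-x * s) = Real.exp (-s * x) := by congr 1; ring
  rw [hE]
  ring

lemma lint_g_val (hpm : Measurable p) (hpnn : ∀ x, 0 ≤ p x)
    (hpint : IntegrableOn p (Set.Ioi 0)) (hp1 : ∫ x in Set.Ioi (0:ℝ), p x = 1)
    (hs : 0 < s) :
    ∫⁻ y, gfun p s y = ENNReal.ofReal ((∫ t in (0:ℝ)..s, L p t) * s⁻¹) := by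
  unfold gfun
  rw [lintegral_indicator measurableSet_Ioi]
  have step : ∫⁻ y in Ioi 0, ENNReal.ofReal (Real.exp (-s * y) * S p y)
      = ∫⁻ y in Ioi 0, ∫⁻ u, (Ioi y).indicator
          (fun u => ENNReal.ofReal (Real.exp (-s * y) * (p u / u))) u := by
    refine lintegral_congr_ae ?_
    filter_upwards [ae_restrict_mem measurableSet_Ioi] with y hy
    rw [mem_Ioi] at hy
    rw [lintegral_indicator measurableSet_Ioi]
    have hS : Real.exp (-s * y) * S p y = ∫ u in Ioi y, Real.exp (-s * y) * (p u / u) := by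
      rw [S, MeasureTheory.integral_const_mul]
    rw [hS, ofReal_integral_eq_lintegral_ofReal
      ((f_integrableOn hpm hpnn hpint hy).const_mul _) ?_]
    filter_upwards [ae_restrict_mem measurableSet_Ioi] with u hu
    exact mul_nonneg (Real.exp_pos _).le (div_nonneg (hpnn u) (hy.trans hu).le)
  rw [step]
  have hmeas2 : AEMeasurable (Function.uncurry fun y u => (Ioi y).indicator
      (fun u => ENNReal.ofReal (Real.exp (-s * y) * (p u / u))) u)
      ((volume.restrict (Ioi 0)).prod volume) := by
    apply Measurable.aemeasurable
    have heq : (Function.uncurry fun y u => (Ioi y).indicator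
        (fun u => ENNReal.ofReal (Real.exp (-s * y) * (p u / u))) u)
        = fun z : ℝ × ℝ => if z.1 < z.2
            then ENNReal.ofReal (Real.exp (-s * z.1) * (p z.2 / z.2)) else 0 := by
      ext z; simp [Function.uncurry, Set.indicator_apply, mem_Ioi]
    rw [heq]
    refine Measurable.ite (measurableSet_lt measurable_fst measurable_snd) ?_ measurable_const
    exact ENNReal.measurable_ofReal.comp
      (((measurable_const.mul measurable_fst).exp).mul
        ((hpm.comp measurable_snd).div measurable_snd))
  rw [lintegral_lintegral_swap hmeas2]
  have hin : ∀ u : ℝ, (∫⁻ y in Ioi 0, (Ioi y).indicator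
      (fun u => ENNReal.ofReal (Real.exp (-s * y) * (p u / u))) u)
      = (Ioi 0).indicator (fun u =>
          ENNReal.ofReal (p u / u * (1 - Real.exp (-s * u))) * ENNReal.ofReal s⁻¹) u := by
    intro u
    have h1 : ∀ y, (Ioi y).indicator
        (fun u => ENNReal.ofReal (Real.exp (-s * y) * (p u / u))) u
        = (Iio u).indicator (fun y => ENNReal.ofReal (Real.exp (-s * y) * (p u / u))) y := by
      intro y; simp [Set.indicator_apply, mem_Ioi, mem_Iio]
    simp_rw [h1]
    rw [lintegral_indicator measurableSet_Iio, Measure.restrict_restrict measurableSet_Iio]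
    have hiI : Iio u ∩ Ioi (0:ℝ) = Ioo 0 u := by
      ext t; simp [mem_Iio, mem_Ioi, mem_Ioo, and_comm]
    rw [hiI]
    by_cases hu : 0 < u
    · rw [Set.indicator_of_mem (mem_Ioi.mpr hu)]
      have h2 : ∀ y : ℝ, ENNReal.ofReal (Real.exp (-s * y) * (p u / u))
          = ENNReal.ofReal (Real.exp (-s * y)) * ENNReal.ofReal (p u / u) := fun y =>
        ENNReal.ofReal_mul (Real.exp_pos _).le
      simp_rw [h2]
      rw [lintegral_mul_const' _ _ ENNReal.ofReal_ne_top, lint_exp hs hu]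
      rw [← ENNReal.ofReal_mul (div_nonneg
        (sub_nonneg.mpr (Real.exp_le_one_iff.mpr (by nlinarith))) hs.le),
        ← ENNReal.ofReal_mul ?_]
      · congr 1; ring
      · have hE : Real.exp (-s * u) ≤ 1 := by
          rw [Real.exp_le_one_iff]; nlinarith
        have := div_nonneg (hpnn u) hu.le
        nlinarith
    · rw [Ioo_eq_empty hu, Measure.restrict_empty, lintegral_zero_measure]
      exact (Set.indicator_of_notMem (by simpa using hu) _).symm
  simp_rw [hin]
  rw [lintegral_indicator measurableSet_Ioi,
    lintegral_mul_const' _ _ ENNReal.ofReal_ne_top,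
    ← K_eq_intLp hpm hpnn hpint hp1 hs,
    ← ENNReal.ofReal_mul (intervalIntegral.integral_nonneg hs.le fun t _ => L_nonneg hpnn t)]

end Aux3
section Aux4

variable {p : ℝ → ℝ} {s : ℝ}

lemma conv_integrable (hpm : Measurable p) (hpnn : ∀ x, 0 ≤ p x)
    (hpint : IntegrableOn p (Set.Ioi 0)) {x : ℝ} (hx : 0 < x) :
    IntegrableOn (fun v => S p (x - v) * S p v) (Ioo 0 x) := by
  have hx2 : 0 < x / 2 := half_pos hx
  have hsplit : Ioo (0:ℝ) x = Ioc 0 (x/2) ∪ Ioo (x/2) x :=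
    (Ioc_union_Ioo_eq_Ioo hx2.le (half_lt_self hx)).symm
  rw [hsplit]
  apply IntegrableOn.union
  · -- on Ioc 0 (x/2)
    have cont1 : ContinuousOn (fun v => S p (x - v) * S p v) (Ioc 0 (x/2)) := by
      refine ContinuousOn.mul ?_ ((S_contOn hpm hpnn hpint).mono (fun v hv => hv.1))
      refine (S_contOn hpm hpnn hpint).comp
        ((continuous_const.sub continuous_id).continuousOn) ?_
      intro v hv
      show (0:ℝ) < x - v
      linarith [hv.2]
    refine ((S_integrableOn_Ioc hpm hpnn hpint hx2).const_mul (S p (x/2))).mono'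
      ((cont1.aemeasurable measurableSet_Ioc).aestronglyMeasurable) ?_
    filter_upwards [ae_restrict_mem measurableSet_Ioc] with v hv
    have hxv : 0 < x - v := by linarith [hv.2]
    rw [Real.norm_eq_abs, abs_of_nonneg (mul_nonneg (S_nonneg hpnn hxv.le) (S_nonneg hpnn hv.1.le))]
    exact mul_le_mul_of_nonneg_right
      (S_antitone hpm hpnn hpint hx2 (by linarith [hv.2])) (S_nonneg hpnn hv.1.le)
  · -- on Ioo (x/2) x
    have refl_int : IntegrableOn (fun v => S p (x - v)) (Ioo (x/2) x) := by
      have hmp : MeasurePreserving (fun v : ℝ => x - v) volume volume :=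
        Measure.measurePreserving_sub_left volume x
      have hemb : MeasurableEmbedding (fun v : ℝ => x - v) := by
        have := ((Homeomorph.neg ℝ).trans (Homeomorph.addLeft x)).measurableEmbedding
        exact this
      have hpre : (fun v : ℝ => x - v) ⁻¹' (Ioo 0 (x/2)) = Ioo (x/2) x := by
        ext v
        simp only [mem_preimage, mem_Ioo]
        constructor <;> rintro ⟨h1, h2⟩ <;> constructor <;> linarith
      have h := (hmp.integrableOn_comp_preimage hemb).mpr
        ((S_integrableOn_Ioc hpm hpnn hpint hx2).mono_set Ioo_subset_Ioc_self)
      rw [hpre] at h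
      exact h
    have cont2 : ContinuousOn (fun v => S p (x - v) * S p v) (Ioo (x/2) x) := by
      refine ContinuousOn.mul ?_ ((S_contOn hpm hpnn hpint).mono (fun v hv => by
        rw [mem_Ioi]; exact hx2.trans hv.1))
      refine (S_contOn hpm hpnn hpint).comp
        ((continuous_const.sub continuous_id).continuousOn) ?_
      intro v hv
      show (0:ℝ) < x - v
      linarith [hv.2]
    refine (refl_int.mul_const (S p (x/2))).mono'
      ((cont2.aemeasurable measurableSet_Ioo).aestronglyMeasurable) ?_
    filter_upwards [ae_restrict_mem measurableSet_Ioo] with v hv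
    have hxv : 0 < x - v := by linarith [hv.2]
    rw [Real.norm_eq_abs, abs_of_nonneg (mul_nonneg (S_nonneg hpnn hxv.le)
      (S_nonneg hpnn (hx2.trans hv.1).le))]
    exact mul_le_mul_of_nonneg_left
      (S_antitone hpm hpnn hpint hx2 hv.1.le) (S_nonneg hpnn hxv.le)

lemma gfun_aemeasurable (hpm : Measurable p) (hpnn : ∀ x, 0 ≤ p x)
    (hpint : IntegrableOn p (Set.Ioi 0)) :
    AEMeasurable (gfun p s) volume := by
  unfold gfun
  rw [aemeasurable_indicator_iff measurableSet_Ioi]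
  exact ENNReal.measurable_ofReal.comp_aemeasurable
    ((((Real.continuous_exp.comp (continuous_const.mul continuous_id)).continuousOn).mul
      (S_contOn hpm hpnn hpint)).aemeasurable measurableSet_Ioi)

lemma ofReal_conv (hpm : Measurable p) (hpnn : ∀ x, 0 ≤ p x)
    (hpint : IntegrableOn p (Set.Ioi 0)) (hs : 0 < s) {x : ℝ} (hx : 0 < x) :
    ENNReal.ofReal (Real.exp (-s * x) * T p x) = ∫⁻ v, gfun p s (x - v) * gfun p s v := by
  have hsupp : ∀ v : ℝ, gfun p s (x - v) * gfun p s v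
      = (Ioo 0 x).indicator (fun v =>
          ENNReal.ofReal (Real.exp (-s * (x - v)) * S p (x - v))
            * ENNReal.ofReal (Real.exp (-s * v) * S p v)) v := by
    intro v
    by_cases h1 : v ∈ Ioo 0 x
    · rw [Set.indicator_of_mem h1]
      unfold gfun
      rw [Set.indicator_of_mem (mem_Ioi.mpr (by linarith [h1.2] : (0:ℝ) < x - v)),
        Set.indicator_of_mem (mem_Ioi.mpr h1.1)]
    · rw [Set.indicator_of_notMem h1]
      rw [mem_Ioo, not_and_or] at h1
      unfold gfun
      rcases h1 with h1 | h1
      · have hv' : v ∉ Ioi (0:ℝ) := by simpa using h1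
        rw [Set.indicator_of_notMem hv', mul_zero]
      · have h1' := not_lt.mp h1
        have hv' : x - v ∉ Ioi (0:ℝ) := by simp only [mem_Ioi, not_lt]; linarith
        rw [Set.indicator_of_notMem hv', zero_mul]
  rw [funext hsupp, lintegral_indicator measurableSet_Ioo]
  have hcomb : ∫⁻ v in Ioo 0 x,
      ENNReal.ofReal (Real.exp (-s * (x - v)) * S p (x - v))
        * ENNReal.ofReal (Real.exp (-s * v) * S p v)
      = ∫⁻ v in Ioo 0 x,
        ENNReal.ofReal (Real.exp (-s * x)) * ENNReal.ofReal (S p (x - v) * S p v) := by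
    refine lintegral_congr_ae ?_
    filter_upwards [ae_restrict_mem measurableSet_Ioo] with v hv
    have hxv : 0 < x - v := by linarith [hv.2]
    rw [← ENNReal.ofReal_mul (mul_nonneg (Real.exp_pos _).le (S_nonneg hpnn hxv.le)),
      ← ENNReal.ofReal_mul (Real.exp_pos _).le]
    congr 1
    have he : Real.exp (-s * (x - v)) * Real.exp (-s * v) = Real.exp (-s * x) := by
      rw [← Real.exp_add]; congr 1; ring
    calc Real.exp (-s * (x - v)) * S p (x - v) * (Real.exp (-s * v) * S p v)
        = Real.exp (-s * (x - v)) * Real.exp (-s * v) * (S p (x - v) * S p v) := by ring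
      _ = Real.exp (-s * x) * (S p (x - v) * S p v) := by rw [he]
  rw [hcomb, lintegral_const_mul' _ _ ENNReal.ofReal_ne_top,
    ← ofReal_integral_eq_lintegral_ofReal (conv_integrable hpm hpnn hpint hx) ?_,
    ← ENNReal.ofReal_mul (Real.exp_pos _).le]
  · congr 1
    unfold T
    rw [integral_of_le hx.le, integral_Ioc_eq_integral_Ioo]
  · filter_upwards [ae_restrict_mem measurableSet_Ioo] with v hv
    exact mul_nonneg (S_nonneg hpnn (by linarith [hv.2] : (0:ℝ) ≤ x - v)) (S_nonneg hpnn hv.1.le)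

lemma T_nonneg (hpnn : ∀ x, 0 ≤ p x) {x : ℝ} (hx : 0 ≤ x) : 0 ≤ T p x := by
  unfold T
  apply intervalIntegral.integral_nonneg hx
  intro v hv
  exact mul_nonneg (S_nonneg hpnn (by linarith [hv.2])) (S_nonneg hpnn hv.1)

lemma LT_main (hpm : Measurable p) (hpnn : ∀ x, 0 ≤ p x)
    (hpint : IntegrableOn p (Set.Ioi 0)) (hp1 : ∫ x in Set.Ioi (0:ℝ), p x = 1)
    (hs : 0 < s) :
    L (T p) s = ((∫ t in (0:ℝ)..s, L p t) / s) ^ 2 := by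
  set g' := (gfun_aemeasurable (s := s) hpm hpnn hpint).mk (gfun p s) with hg'def
  have hg'meas : Measurable g' := (gfun_aemeasurable hpm hpnn hpint).measurable_mk
  have hg'eq : gfun p s =ᵐ[volume] g' := (gfun_aemeasurable hpm hpnn hpint).ae_eq_mk
  set F := fun x => Real.exp (-s * x) * T p x with hFdef
  have hpt : ∀ x : ℝ, (Ioi 0).indicator (fun x => ENNReal.ofReal (F x)) x
      = ∫⁻ v, gfun p s (x - v) * gfun p s v := by
    intro x
    by_cases hx : 0 < x
    · rw [Set.indicator_of_mem (mem_Ioi.mpr hx)]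
      exact ofReal_conv hpm hpnn hpint hs hx
    · rw [Set.indicator_of_notMem (by simpa using hx)]
      symm
      have hz : ∀ v : ℝ, gfun p s (x - v) * gfun p s v = 0 := by
        intro v
        by_cases hv : 0 < v
        · have hx' := not_lt.mp hx
          have hv' : x - v ∉ Ioi (0:ℝ) := by simp only [mem_Ioi, not_lt]; linarith
          unfold gfun
          rw [Set.indicator_of_notMem hv', zero_mul]
        · have hv' : v ∉ Ioi (0:ℝ) := by simpa using hv
          unfold gfun
          rw [Set.indicator_of_notMem hv', mul_zero]
      rw [funext hz, lintegral_zero]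
  have hae : ∀ᵐ x : ℝ, (∫⁻ v, gfun p s (x - v) * gfun p s v) = ∫⁻ v, g' (x - v) * g' v := by
    have hq : Measure.QuasiMeasurePreserving (fun z : ℝ × ℝ => z.1 - z.2)
        ((volume : Measure ℝ).prod volume) volume :=
      quasiMeasurePreserving_sub_of_right_invariant volume volume
    have h1 : ∀ᵐ z : ℝ × ℝ ∂((volume : Measure ℝ).prod volume),
        gfun p s (z.1 - z.2) = g' (z.1 - z.2) := hq.ae hg'eq
    have h2 := Measure.ae_ae_of_ae_prod h1
    filter_upwards [h2] with x hx2
    refine lintegral_congr_ae ?_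
    filter_upwards [hx2, hg'eq] with v hv1 hv2
    rw [hv1, hv2]
  have hH'meas : Measurable fun x => ∫⁻ v, g' (x - v) * g' v :=
    Measurable.lintegral_prod_right'
      ((hg'meas.comp (measurable_fst.sub measurable_snd)).mul (hg'meas.comp measurable_snd))
  have hFnn : ∀ x ∈ Ioi (0:ℝ), 0 ≤ F x := fun x hx =>
    mul_nonneg (Real.exp_pos _).le (T_nonneg hpnn (le_of_lt hx))
  have hFaesm : AEStronglyMeasurable F (volume.restrict (Ioi 0)) := by
    have heq : ∀ᵐ x ∂(volume.restrict (Ioi 0)),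
        (fun x => (∫⁻ v, g' (x - v) * g' v).toReal) x = F x := by
      filter_upwards [ae_restrict_mem measurableSet_Ioi, ae_restrict_of_ae hae] with x hx hx2
      rw [← hx2, ← hpt x, Set.indicator_of_mem hx, ENNReal.toReal_ofReal (hFnn x hx)]
    exact ((ENNReal.measurable_toReal.comp hH'meas).aestronglyMeasurable).congr heq
  have key : ∫⁻ x in Ioi 0, ENNReal.ofReal (F x)
      = (ENNReal.ofReal ((∫ t in (0:ℝ)..s, L p t) * s⁻¹)) ^ 2 := by
    calc ∫⁻ x in Ioi 0, ENNReal.ofReal (F x)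
        = ∫⁻ x, (Ioi 0).indicator (fun x => ENNReal.ofReal (F x)) x :=
          (lintegral_indicator measurableSet_Ioi _).symm
      _ = ∫⁻ x, ∫⁻ v, gfun p s (x - v) * gfun p s v := lintegral_congr hpt
      _ = ∫⁻ x, ∫⁻ v, g' (x - v) * g' v := lintegral_congr_ae hae
      _ = ∫⁻ v, ∫⁻ x, g' (x - v) * g' v := by
          refine lintegral_lintegral_swap ?_
          exact ((hg'meas.comp (measurable_fst.sub measurable_snd)).mul
            (hg'meas.comp measurable_snd)).aemeasurable
      _ = ∫⁻ v, (∫⁻ x, g' (x - v)) * g' v := by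
          refine lintegral_congr fun v => ?_
          exact lintegral_mul_const (g' v) (hg'meas.comp (measurable_id.sub measurable_const))
      _ = ∫⁻ v, (∫⁻ x, g' x) * g' v := by
          refine lintegral_congr fun v => ?_
          rw [lintegral_sub_right_eq_self g' v]
      _ = (∫⁻ x, g' x) * ∫⁻ v, g' v := lintegral_const_mul _ hg'meas
      _ = (∫⁻ y, gfun p s y) * ∫⁻ y, gfun p s y := by
          rw [lintegral_congr_ae hg'eq]
      _ = (ENNReal.ofReal ((∫ t in (0:ℝ)..s, L p t) * s⁻¹)) ^ 2 := by
          rw [lint_g_val hpm hpnn hpint hp1 hs, sq]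
  have hLrw : L (T p) s = ∫ x in Ioi (0:ℝ), F x := rfl
  rw [hLrw, integral_eq_lintegral_of_nonneg_ae ?_ hFaesm]
  · rw [key, ← ENNReal.ofReal_pow (mul_nonneg
      (intervalIntegral.integral_nonneg hs.le fun t _ => L_nonneg hpnn t) (by positivity)),
      ENNReal.toReal_ofReal (by positivity), div_eq_mul_inv]
  · filter_upwards [ae_restrict_mem measurableSet_Ioi] with x hx
    exact hFnn x hx

end Aux4
lemma L_zero {p : ℝ → ℝ} (hp1 : ∫ x in Set.Ioi (0:ℝ), p x = 1) : L p 0 = 1 := by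
  rw [L]
  simp only [neg_zero, zero_mul, Real.exp_zero, one_mul]
  exact hp1

/-- T is a contraction with factor 2/(α+1) < 1 in the metric d_α. -/
theorem T_contraction (p q : ℝ → ℝ) (α w : ℝ) (hα1 : 1 < α) (hα2 : α < 2)
    (hpm : Measurable p) (hqm : Measurable q)
    (hpnn : ∀ x, 0 ≤ p x) (hqnn : ∀ x, 0 ≤ q x)
    (hpint : IntegrableOn p (Set.Ioi 0)) (hqint : IntegrableOn q (Set.Ioi 0))
    (hp1 : ∫ x in Set.Ioi (0:ℝ), p x = 1) (hq1 : ∫ x in Set.Ioi (0:ℝ), q x = 1)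
    (hpw : ∫ x in Set.Ioi (0:ℝ), x * p x = w)
    (hqw : ∫ x in Set.Ioi (0:ℝ), x * q x = w)
    (hpM : IntegrableOn (fun x => x ^ α * p x) (Set.Ioi 0))
    (hqM : IntegrableOn (fun x => x ^ α * q x) (Set.Ioi 0)) :
    dAlpha α (T p) (T q) ≤ ENNReal.ofReal (2 / (α + 1)) * dAlpha α p q
      ∧ 2 / (α + 1) < 1 := by
  have hα0 : (0:ℝ) < α + 1 := by linarith
  have hcon : 2 / (α + 1) < 1 := by rw [div_lt_one hα0]; linarith
  refine ⟨?_, hcon⟩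
  by_cases hdtop : dAlpha α p q = ⊤
  · rw [hdtop, ENNReal.mul_top (by
      simp only [ne_eq, ENNReal.ofReal_eq_zero, not_le]
      positivity)]
    exact le_top
  set D := (dAlpha α p q).toReal with hDdef
  have hDnn : 0 ≤ D := ENNReal.toReal_nonneg
  have hpq : ∀ t : ℝ, 0 < t → |L p t - L q t| ≤ D * t ^ α := by
    intro t ht
    have h1 : ENNReal.ofReal (|L p t - L q t| / t ^ α) ≤ dAlpha α p q :=
      le_iSup₂ (f := fun (u : ℝ) (_ : u ∈ Ioi (0:ℝ)) =>
        ENNReal.ofReal (|L p u - L q u| / u ^ α)) t (mem_Ioi.mpr ht)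
    have h2 : |L p t - L q t| / t ^ α ≤ D :=
      (ENNReal.ofReal_le_iff_le_toReal hdtop).mp h1
    have htα : (0:ℝ) < t ^ α := Real.rpow_pos_of_pos ht α
    calc |L p t - L q t| = |L p t - L q t| / t ^ α * t ^ α := by field_simp
      _ ≤ D * t ^ α := mul_le_mul_of_nonneg_right h2 htα.le
  rw [dAlpha]
  refine iSup₂_le fun s hs => ?_
  rw [mem_Ioi] at hs
  set Ip := ∫ t in (0:ℝ)..s, L p t with hIp
  set Iq := ∫ t in (0:ℝ)..s, L q t with hIq
  have hLpii : IntervalIntegrable (L p) volume 0 s :=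
    (intervalIntegrable_iff_integrableOn_Ioc_of_le hs.le).mpr (L_integrableOn hpm hpnn hpint hp1)
  have hLqii : IntervalIntegrable (L q) volume 0 s :=
    (intervalIntegrable_iff_integrableOn_Ioc_of_le hs.le).mpr (L_integrableOn hqm hqnn hqint hq1)
  have hIpnn : 0 ≤ Ip := intervalIntegral.integral_nonneg hs.le fun t _ => L_nonneg hpnn t
  have hIqnn : 0 ≤ Iq := intervalIntegral.integral_nonneg hs.le fun t _ => L_nonneg hqnn t
  have hIple : Ip ≤ s := by
    calc Ip ≤ ∫ _ in (0:ℝ)..s, (1:ℝ) :=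
          intervalIntegral.integral_mono_on hs.le hLpii intervalIntegrable_const
            (fun t ht => L_le_one hpm hpnn hpint hp1 ht.1)
      _ = s := by simp
  have hIqle : Iq ≤ s := by
    calc Iq ≤ ∫ _ in (0:ℝ)..s, (1:ℝ) :=
          intervalIntegral.integral_mono_on hs.le hLqii intervalIntegrable_const
            (fun t ht => L_le_one hqm hqnn hqint hq1 ht.1)
      _ = s := by simp
  have habs : IntervalIntegrable (fun t => |L p t - L q t|) volume 0 s := (hLpii.sub hLqii).abs
  have hrint : IntervalIntegrable (fun t => D * t ^ α) volume 0 s :=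
    (intervalIntegral.intervalIntegrable_rpow' (by linarith : (-1:ℝ) < α)).const_mul D
  have hIdiff : |Ip - Iq| ≤ D * (s ^ (α+1) / (α+1)) := by
    have h1 : Ip - Iq = ∫ t in (0:ℝ)..s, (L p t - L q t) :=
      (intervalIntegral.integral_sub hLpii hLqii).symm
    rw [h1]
    calc |∫ t in (0:ℝ)..s, (L p t - L q t)| ≤ ∫ t in (0:ℝ)..s, |L p t - L q t| :=
          intervalIntegral.abs_integral_le_integral_abs hs.le
      _ ≤ ∫ t in (0:ℝ)..s, D * t ^ α := by
          apply intervalIntegral.integral_mono_on hs.le habs hrint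
          intro t ht
          rcases eq_or_lt_of_le ht.1 with h0 | h0
          · rw [← h0, L_zero hp1, L_zero hq1, sub_self, abs_zero,
              Real.zero_rpow (by linarith : α ≠ 0)]
            simp
          · exact hpq t h0
      _ = D * (s ^ (α+1) / (α+1)) := by
          rw [intervalIntegral.integral_const_mul, integral_rpow (Or.inl (by linarith))]
          rw [Real.zero_rpow (by linarith : α + 1 ≠ 0)]
          ring
  have hTp := LT_main hpm hpnn hpint hp1 hs
  have hTq := LT_main hqm hqnn hqint hq1 hs
  have hsα : (0:ℝ) < s ^ α := Real.rpow_pos_of_pos hs α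
  have hmain : |L (T p) s - L (T q) s| / s ^ α ≤ 2/(α+1) * D := by
    rw [hTp, hTq, ← hIp, ← hIq]
    have hfac : (Ip/s)^2 - (Iq/s)^2 = (Ip/s + Iq/s) * (Ip/s - Iq/s) := by ring
    have h2 : |Ip/s + Iq/s| ≤ 2 := by
      rw [abs_of_nonneg (by positivity)]
      have hp' : Ip/s ≤ 1 := by rw [div_le_one hs]; exact hIple
      have hq' : Iq/s ≤ 1 := by rw [div_le_one hs]; exact hIqle
      linarith
    have h3 : |Ip/s - Iq/s| = |Ip - Iq|/s := by
      rw [div_sub_div_same, abs_div, abs_of_pos hs]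
    calc |(Ip/s)^2 - (Iq/s)^2| / s^α = |Ip/s + Iq/s| * |Ip/s - Iq/s| / s^α := by
          rw [hfac, abs_mul]
      _ ≤ 2 * (|Ip - Iq|/s) / s^α := by
          rw [h3]
          gcongr
      _ ≤ 2 * (D * (s ^ (α+1) / (α+1))/s) / s^α := by gcongr
      _ = 2/(α+1)*D := by
          rw [Real.rpow_add_one (ne_of_gt hs)]
          field_simp
  calc ENNReal.ofReal (|L (T p) s - L (T q) s| / s ^ α)
      ≤ ENNReal.ofReal (2/(α+1) * D) := ENNReal.ofReal_le_ofReal hmain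
    _ = ENNReal.ofReal (2/(α+1)) * ENNReal.ofReal D := ENNReal.ofReal_mul (by positivity)
    _ = ENNReal.ofReal (2/(α+1)) * dAlpha α p q := by
        rw [hDdef, ENNReal.ofReal_toReal hdtop]
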